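/- Fix s-stage RK coefficients a_{ij}, b_i, c_i with b_i ≠ 0 for all i, step sizes h_n ≠ 0 and times t_n (n = 0,…,N−1), a differentiable function C : ℝ^d → ℝ, and f : ℝ^d × ℝ → ℝ^d differentiable in its first argument. For fixed multipliers λ₀, λ₁, …, λ_N ∈ ℝ^d and Λ_{n,i} ∈ ℝ^d, define the Lagrangian L(α, x₀,…,x_N, (k_{n,i})) = C(x_N) − λ₀ᵀ(x₀ − α) − Σ_{n=0}^{N−1} λ_{n+1}ᵀ( x_{n+1} − x_n − h_n Σ_{i=1}^s b_i k_{n,i} ) − Σ_{n=0}^{N−1} h_n Σ_{i=1}^s b_i Λ_{n,i}ᵀ( k_{n,i} − f(X_{n,i}, t_n + c_i h_n) ), where X_{n,i} = x_n + h_n Σ_{j=1}^s a_{ij} k_{n,j}. Suppose at a given point (α, x₀,…,x_N, (k_{n,i})) the partial gradients of L with respect to x₀, x₁, …, x_N and with respect to every k_{n,i} all vanish. Then: (i) λ_N = ∇C(x_N); (ii) setting ℓ_{n,i} = −(∂_x f(X_{n,i}, t_n + c_i h_n))ᵀ Λ_{n,i}, one has λ_{n+1} = λ_n + h_n Σ_{i=1}^s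 B_i ℓ_{n,i} and Λ_{n,i} = λ_n + h_n Σ_{j=1}^s A_{ij} ℓ_{n,j} for all n and i, where A_{ij} = b_j − b_j a_{ji} / b_i and B_i = b_i; (iii) the gradient of L with respect to α equals λ₀. -/

import Mathlib

open Matrix BigOperators

noncomputable def dotCLM {d : ℕ} (w : Fin d → ℝ) : (Fin d → ℝ) →L[ℝ] ℝ :=
  ∑ i, w i • (ContinuousLinearMap.proj i : (Fin d → ℝ) →L[ℝ] ℝ)

lemma dotCLM_apply {d : ℕ} (w v : Fin d → ℝ) : dotCLM w v = w ⬝ᵥ v := by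
  simp [dotCLM, dotProduct]

lemma hasFDerivAt_dot {d : ℕ} (w z : Fin d → ℝ) :
    HasFDerivAt (fun y : Fin d → ℝ => w ⬝ᵥ y) (dotCLM w) z := by
  have h := (dotCLM w).hasFDerivAt (x := z)
  exact h.congr_of_eventuallyEq (Filter.Eventually.of_forall fun y => (dotCLM_apply w y).symm)

lemma sum_if_succ {N : ℕ} {M : Type*} [AddCommMonoid M] (g : Fin (N+1) → M) (m : Fin (N+1)) :
    ∑ n : Fin N, (if n.succ = m then g n.succ else 0)
      = if m = 0 then 0 else g m := by
  induction m using Fin.cases with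
  | zero => simp [Fin.succ_ne_zero]
  | succ p => simp [Fin.succ_inj, (Fin.succ_ne_zero p)]

lemma sum_if_castSucc {N : ℕ} {M : Type*} [AddCommMonoid M] (g : Fin N → M) (n : Fin N) :
    ∑ n' : Fin N, (if n'.castSucc = n.castSucc then g n' else 0) = g n := by
  simp [Fin.castSucc_inj]

lemma sum_if_castSucc_last {N : ℕ} {M : Type*} [AddCommMonoid M] (g : Fin N → M) :
    ∑ n' : Fin N, (if n'.castSucc = Fin.last N then g n' else 0) = 0 := by
  apply Finset.sum_eq_zero
  intro n' _
  rw [if_neg (Fin.castSucc_lt_last n').ne]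

lemma comp_ite {d : ℕ} (A : (Fin d → ℝ) →L[ℝ] ℝ) (P : Prop) [Decidable P] :
    A.comp (if P then ContinuousLinearMap.id ℝ (Fin d → ℝ) else 0)
      = if P then A else 0 := by
  split_ifs <;> simp

lemma comp_neg_comp_ite {d : ℕ} (A : (Fin d → ℝ) →L[ℝ] ℝ)
    (B : (Fin d → ℝ) →L[ℝ] (Fin d → ℝ)) (P : Prop) [Decidable P] :
    A.comp (-(B.comp (if P then ContinuousLinearMap.id ℝ (Fin d → ℝ) else 0)))
      = if P then A.comp (-B) else 0 := by
  split_ifs <;> simp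

lemma smul_sum_smul_ite {s : ℕ} {M : Type*} [AddCommGroup M] [Module ℝ M]
    (r : ℝ) (b : Fin s → ℝ) (G : Fin s → M) (P : Prop) [Decidable P] :
    (r • ∑ i : Fin s, b i • (if P then G i else 0))
      = if P then r • ∑ i : Fin s, b i • G i else 0 := by
  split_ifs <;> simp

lemma sum_smul_ite {ι : Type*} [Fintype ι] [DecidableEq ι] {M : Type*}
    [AddCommMonoid M] [Module ℝ M] (r : ι → ℝ) (i0 : ι) (A : M) :
    ∑ j, r j • (if j = i0 then A else 0) = r i0 • A := by
  have hc : ∀ j, r j • (if j = i0 then A else 0) = if j = i0 then r j • A else 0 :=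
    fun j => by split_ifs <;> simp
  simp [hc]

lemma dot_ite_single {d : ℕ} (w : Fin d → ℝ) (P : Prop) [Decidable P] (j : Fin d) :
    w ⬝ᵥ (if P then ContinuousLinearMap.id ℝ (Fin d → ℝ) else 0) (Pi.single j 1)
      = if P then w j else 0 := by
  split_ifs <;> simp [dotProduct, Pi.single_apply]

/-- Theorem 3.6: computing `∇_α C(x_N)` for an RK discretisation via Lagrange
multipliers (reverse-mode automatic differentiation) implicitly integrates the
adjoint equations with the companion coefficients `A_{ij} = b_j − b_j a_{ji}/b_i`,
`B_i = b_i`, so that the hidden state–adjoint integrator is a symplectic PRK scheme. -/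
theorem stmt_11 (d s N : ℕ)
    (a : Fin s → Fin s → ℝ) (b c : Fin s → ℝ) (hb : ∀ i, b i ≠ 0)
    (h : Fin N → ℝ) (hh : ∀ n, h n ≠ 0) (t : Fin N → ℝ)
    (C : (Fin d → ℝ) → ℝ) (hC : Differentiable ℝ C)
    (f : (Fin d → ℝ) → ℝ → (Fin d → ℝ))
    (Df : (Fin d → ℝ) → ℝ → ((Fin d → ℝ) →L[ℝ] (Fin d → ℝ)))
    (Jf : (Fin d → ℝ) → ℝ → Matrix (Fin d) (Fin d) ℝ)
    (hf : ∀ y τ, HasFDerivAt (fun z => f z τ) (Df y τ) y)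
    (hDf : ∀ y τ v, Df y τ v = (Jf y τ).mulVec v)
    -- the multipliers
    (lam : Fin (N + 1) → Fin d → ℝ) (Lam : Fin N → Fin s → Fin d → ℝ)
    -- the Lagrangian
    (L : (Fin d → ℝ) → (Fin (N + 1) → Fin d → ℝ) → (Fin N → Fin s → Fin d → ℝ) → ℝ)
    (X : Fin N → Fin s → Fin d → ℝ)
    -- the point at which the gradients are evaluated
    (α : Fin d → ℝ) (x : Fin (N + 1) → Fin d → ℝ) (k : Fin N → Fin s → Fin d → ℝ)
    (hX : ∀ (n : Fin N) (i : Fin s),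
      X n i = x n.castSucc + h n • ∑ j, a i j • k n j)
    (hL : ∀ (α' : Fin d → ℝ) (x' : Fin (N + 1) → Fin d → ℝ)
        (k' : Fin N → Fin s → Fin d → ℝ),
      L α' x' k' =
        C (x' (Fin.last N)) - lam 0 ⬝ᵥ (x' 0 - α')
          - ∑ n : Fin N, lam n.succ ⬝ᵥ
              (x' n.succ - x' n.castSucc - h n • ∑ i, b i • k' n i)
          - ∑ n : Fin N, h n * ∑ i, b i *
              (Lam n i ⬝ᵥ (k' n i -
                f (x' n.castSucc + h n • ∑ j, a i j • k' n j) (t n + c i * h n))))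
    -- the gradient of the cost at the final state
    (gC : Fin d → ℝ) (hgC : ∀ v, fderiv ℝ C (x (Fin.last N)) v = gC ⬝ᵥ v)
    -- hypothesis: all partial gradients of L with respect to x₀,…,x_N and the k_{n,i} vanish
    (hgradx : ∀ m : Fin (N + 1),
      fderiv ℝ (fun v => L α (Function.update x m v) k) (x m) = 0)
    (hgradk : ∀ (n : Fin N) (i : Fin s),
      fderiv ℝ (fun v => L α x (Function.update k n (Function.update (k n) i v)))
        (k n i) = 0) :
    -- (i) λ_N = ∇C(x_N)
    lam (Fin.last N) = gC ∧
    -- (ii) the multipliers perform a PRK integration of the adjoint equations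
    --      with the transposed-reflected coefficients A_{ij} = b_j − b_j a_{ji}/b_i, B_i = b_i
    (∀ ell : Fin N → Fin s → Fin d → ℝ,
      (∀ (n : Fin N) (i : Fin s),
        ell n i = -((Jf (X n i) (t n + c i * h n))ᵀ.mulVec (Lam n i))) →
      (∀ n : Fin N, lam n.succ = lam n.castSucc + h n • ∑ i, b i • ell n i) ∧
      (∀ (n : Fin N) (i : Fin s),
        Lam n i = lam n.castSucc + h n • ∑ j, (b j - b j * a j i / b i) • ell n j)) ∧
    -- (iii) the gradient of L with respect to α is λ₀
    (∀ w, fderiv ℝ (fun v => L v x k) α w = lam 0 ⬝ᵥ w) := by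
  classical

  -- derivative of the update map
  have hupd : ∀ (m p : Fin (N+1)) (z : Fin d → ℝ),
      HasFDerivAt (fun v : Fin d → ℝ => Function.update x m v p)
        (if p = m then ContinuousLinearMap.id ℝ (Fin d → ℝ) else 0) z := by
    intro m p z
    by_cases hp : p = m
    · subst hp
      simp only [if_pos rfl]
      exact (hasFDerivAt_id z).congr_of_eventuallyEq
        (Filter.Eventually.of_forall fun v => by simp [Function.update_self])
    · simp only [if_neg hp]
      exact (hasFDerivAt_const (x p) z).congr_of_eventuallyEq
        (Filter.Eventually.of_forall fun v => by simp [Function.update_of_ne hp])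
  -- the full derivative in x-direction m
  have main_x : ∀ m : Fin (N+1),
      HasFDerivAt (fun v => L α (Function.update x m v) k)
        ((ContinuousLinearMap.comp (fderiv ℝ C (x (Fin.last N)))
            (if Fin.last N = m then ContinuousLinearMap.id ℝ (Fin d → ℝ) else 0)
          - (dotCLM (lam 0)).comp
            (if (0 : Fin (N+1)) = m then ContinuousLinearMap.id ℝ (Fin d → ℝ) else 0)
          - ∑ n : Fin N, (dotCLM (lam n.succ)).comp
              ((if n.succ = m then ContinuousLinearMap.id ℝ (Fin d → ℝ) else 0)
                - (if n.castSucc = m then ContinuousLinearMap.id ℝ (Fin d → ℝ) else 0))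
          - ∑ n : Fin N, (h n) • ∑ i : Fin s, (b i) •
              (dotCLM (Lam n i)).comp
                (-( (Df (X n i) (t n + c i * h n)).comp
                    (if n.castSucc = m then ContinuousLinearMap.id ℝ (Fin d → ℝ) else 0)))) )
        (x m) := by
    intro m
    have hfun : (fun v => L α (Function.update x m v) k)
        = fun v => C (Function.update x m v (Fin.last N))
            - lam 0 ⬝ᵥ (Function.update x m v 0 - α)
            - ∑ n : Fin N, lam n.succ ⬝ᵥ
                (Function.update x m v n.succ - Function.update x m v n.castSucc
                  - h n • ∑ i, b i • k n i)
            - ∑ n : Fin N, h n * ∑ i, b i *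
                (Lam n i ⬝ᵥ (k n i -
                  f (Function.update x m v n.castSucc + h n • ∑ j, a i j • k n j)
                    (t n + c i * h n))) := by
      funext v; rw [hL]
    rw [hfun]
    have H1 : HasFDerivAt
        (fun v => C (Function.update x m v (Fin.last N)))
        ((fderiv ℝ C (x (Fin.last N))).comp
          (if Fin.last N = m then ContinuousLinearMap.id ℝ (Fin d → ℝ) else 0)) (x m) := by
      have hin := hupd m (Fin.last N) (x m)
      have hout : HasFDerivAt C (fderiv ℝ C (x (Fin.last N)))
          (Function.update x m (x m) (Fin.last N)) := by
        rw [Function.update_eq_self]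
        exact (hC (x (Fin.last N))).hasFDerivAt
      have := hout.comp (x m) hin
      exact this
    have H2 : HasFDerivAt
        (fun v => lam 0 ⬝ᵥ (Function.update x m v 0 - α))
        ((dotCLM (lam 0)).comp
          (if (0 : Fin (N+1)) = m then ContinuousLinearMap.id ℝ (Fin d → ℝ) else 0)) (x m) := by
      have hin := (hupd m 0 (x m)).sub_const α
      exact (hasFDerivAt_dot (lam 0) _).comp (x m) hin
    have H3 : ∀ n : Fin N, HasFDerivAt
        (fun v => lam n.succ ⬝ᵥ
            (Function.update x m v n.succ - Function.update x m v n.castSucc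
              - h n • ∑ i, b i • k n i))
        ((dotCLM (lam n.succ)).comp
          ((if n.succ = m then ContinuousLinearMap.id ℝ (Fin d → ℝ) else 0)
            - (if n.castSucc = m then ContinuousLinearMap.id ℝ (Fin d → ℝ) else 0))) (x m) := by
      intro n
      exact (hasFDerivAt_dot (lam n.succ) _).comp (x m)
        (((hupd m n.succ (x m)).sub (hupd m n.castSucc (x m))).sub_const _)
    have H4 : ∀ (n : Fin N) (i : Fin s), HasFDerivAt
        (fun v => Lam n i ⬝ᵥ (k n i -
            f (Function.update x m v n.castSucc + h n • ∑ j, a i j • k n j)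
              (t n + c i * h n)))
        ((dotCLM (Lam n i)).comp
          (-( (Df (X n i) (t n + c i * h n)).comp
              (if n.castSucc = m then ContinuousLinearMap.id ℝ (Fin d → ℝ) else 0)))) (x m) := by
      intro n i
      have hin : HasFDerivAt
          (fun v => Function.update x m v n.castSucc + h n • ∑ j, a i j • k n j)
          (if n.castSucc = m then ContinuousLinearMap.id ℝ (Fin d → ℝ) else 0) (x m) :=
        (hupd m n.castSucc (x m)).add_const _
      have hval : Function.update x m (x m) n.castSucc + h n • ∑ j, a i j • k n j
          = X n i := by rw [Function.update_eq_self, hX]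
      have hout : HasFDerivAt (fun z => f z (t n + c i * h n))
          (Df (X n i) (t n + c i * h n))
          (Function.update x m (x m) n.castSucc + h n • ∑ j, a i j • k n j) := by
        rw [hval]; exact hf _ _
      have hcomp := hout.comp (x m) hin
      exact (hasFDerivAt_dot (Lam n i) _).comp (x m) (hcomp.const_sub (k n i))
    exact ((H1.sub H2).sub (HasFDerivAt.fun_sum fun n _ => H3 n)).sub
      (HasFDerivAt.fun_sum fun n _ =>
        ((HasFDerivAt.fun_sum fun i _ => (H4 n i).const_mul (b i)).const_mul (h n)))
  
  have hfC : fderiv ℝ C (x (Fin.last N)) = dotCLM gC :=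
    ContinuousLinearMap.ext fun v => by rw [hgC, dotCLM_apply]
  have hDx' : ∀ m : Fin (N+1),
      ((if Fin.last N = m then dotCLM gC else 0)
        - (if (0:Fin (N+1)) = m then dotCLM (lam 0) else 0)
        - ((if m = 0 then 0 else dotCLM (lam m))
            - ∑ n : Fin N, (if n.castSucc = m then dotCLM (lam n.succ) else 0))
        - ∑ n : Fin N, (if n.castSucc = m then
            h n • ∑ i : Fin s, b i •
              (dotCLM (Lam n i)).comp (-(Df (X n i) (t n + c i * h n))) else 0)) = 0 := by
    intro m
    have E := ((main_x m).fderiv).symm.trans (hgradx m)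
    rw [hfC] at E
    simp only [ContinuousLinearMap.comp_sub, comp_ite, comp_neg_comp_ite, smul_sum_smul_ite,
      Finset.sum_sub_distrib, sum_if_succ (fun w => dotCLM (lam w)) m] at E
    exact E
  
  have key : ∀ (n : Fin N) (i : Fin s) (j : Fin d),
      Lam n i ⬝ᵥ (Df (X n i) (t n + c i * h n)) (Pi.single j 1)
        = ((Jf (X n i) (t n + c i * h n))ᵀ.mulVec (Lam n i)) j := by
    intro n i j
    rw [hDf, Matrix.dotProduct_mulVec, Matrix.mulVec_transpose]
    simp [dotProduct, Pi.single_apply]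
  have F1 : lam (Fin.last N) = gC := by
    funext j
    have E := hDx' (Fin.last N)
    rw [if_pos rfl] at E
    simp only [sum_if_castSucc_last] at E
    by_cases h0 : Fin.last N = (0 : Fin (N+1))
    · rw [if_pos h0.symm, if_pos h0] at E
      have E2 := congrArg (fun D : (Fin d → ℝ) →L[ℝ] ℝ => D (Pi.single j 1)) E
      simp only [ContinuousLinearMap.sub_apply, ContinuousLinearMap.zero_apply,
        dotCLM_apply, dotProduct_single, mul_one, sub_zero, zero_sub, sub_neg_eq_add] at E2
      rw [h0]
      linarith [E2]
    · rw [if_neg (fun hh' => h0 hh'.symm), if_neg h0] at E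
      have E2 := congrArg (fun D : (Fin d → ℝ) →L[ℝ] ℝ => D (Pi.single j 1)) E
      simp only [ContinuousLinearMap.sub_apply, ContinuousLinearMap.zero_apply,
        dotCLM_apply, dotProduct_single, mul_one, sub_zero, zero_sub, sub_neg_eq_add] at E2
      linarith [E2]
  have F2 : ∀ n : Fin N, lam n.succ = lam n.castSucc
      + h n • ∑ i, b i • (-((Jf (X n i) (t n + c i * h n))ᵀ.mulVec (Lam n i))) := by
    intro n
    funext j
    have E := hDx' n.castSucc
    rw [if_neg (Fin.castSucc_lt_last n).ne'] at E
    simp only [sum_if_castSucc] at E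
    have E2 := congrArg (fun D : (Fin d → ℝ) →L[ℝ] ℝ => D (Pi.single j 1)) E
    simp only [ContinuousLinearMap.sub_apply, ContinuousLinearMap.zero_apply,
      ContinuousLinearMap.smul_apply, ContinuousLinearMap.sum_apply,
      ContinuousLinearMap.comp_apply, ContinuousLinearMap.neg_apply,
      dotCLM_apply, dotProduct_neg, key, smul_eq_mul] at E2
    have hgoal : (lam n.castSucc + h n • ∑ i, b i •
        (-((Jf (X n i) (t n + c i * h n))ᵀ.mulVec (Lam n i)))) j
        = lam n.castSucc j + h n * ∑ i, b i *
            (-(((Jf (X n i) (t n + c i * h n))ᵀ.mulVec (Lam n i)) j)) := by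
      simp [Finset.sum_apply, mul_comm]
    rw [hgoal]
    by_cases hn0 : n.castSucc = (0 : Fin (N+1))
    · rw [if_pos hn0.symm, if_pos hn0] at E2
      simp only [ContinuousLinearMap.zero_apply, dotCLM_apply,
        dotProduct_single, mul_one, zero_sub, sub_zero] at E2
      rw [hn0]
      have : lam n.castSucc j = lam (0 : Fin (N+1)) j := by rw [hn0]
      rw [hn0] at this
      linarith [E2]
    · rw [if_neg (fun hh' => hn0 hh'.symm), if_neg hn0] at E2
      simp only [ContinuousLinearMap.zero_apply, dotCLM_apply,
        dotProduct_single, mul_one, zero_sub, sub_zero] at E2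
      linarith [E2]
  
  have main_k : ∀ (n0 : Fin N) (i0 : Fin s), HasFDerivAt
      (fun v => L α x (Function.update k n0 (Function.update (k n0) i0 v)))
      ((0 : (Fin d → ℝ) →L[ℝ] ℝ) - 0
        - ∑ n' : Fin N, (if n' = n0 then
            (dotCLM (lam n'.succ)).comp
              (-((h n' * b i0) • ContinuousLinearMap.id ℝ (Fin d → ℝ))) else 0)
        - ∑ n' : Fin N, (if n' = n0 then
            h n' • ∑ i' : Fin s, b i' •
              (dotCLM (Lam n' i')).comp
                ((if i' = i0 then ContinuousLinearMap.id ℝ (Fin d → ℝ) else 0)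
                  - (Df (X n' i') (t n' + c i' * h n')).comp
                      ((h n' * a i' i0) • ContinuousLinearMap.id ℝ (Fin d → ℝ))) else 0))
      (k n0 i0) := by
    intro n0 i0
    have hu0 : Function.update k n0 (Function.update (k n0) i0 (k n0 i0)) = k := by
      rw [Function.update_eq_self, Function.update_eq_self]
    have hupdk : ∀ (p : Fin N) (q : Fin s),
        HasFDerivAt (fun v : Fin d → ℝ =>
            Function.update k n0 (Function.update (k n0) i0 v) p q)
          (if p = n0 then (if q = i0 then ContinuousLinearMap.id ℝ (Fin d → ℝ) else 0)
            else 0) (k n0 i0) := by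
      intro p q
      by_cases hp : p = n0
      · subst hp
        rw [if_pos rfl]
        by_cases hq : q = i0
        · subst hq
          rw [if_pos rfl]
          exact (hasFDerivAt_id _).congr_of_eventuallyEq
            (Filter.Eventually.of_forall fun v => by
              simp [Function.update_self])
        · rw [if_neg hq]
          exact (hasFDerivAt_const (k p q) _).congr_of_eventuallyEq
            (Filter.Eventually.of_forall fun v => by
              simp [Function.update_self, Function.update_of_ne hq])
      · rw [if_neg hp]
        exact (hasFDerivAt_const (k p q) _).congr_of_eventuallyEq
          (Filter.Eventually.of_forall fun v => by
            simp [Function.update_of_ne hp])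
    have hsum_inner : ∀ (r : Fin s → ℝ),
        HasFDerivAt (fun v : Fin d → ℝ =>
            ∑ j, r j • Function.update k n0 (Function.update (k n0) i0 v) n0 j)
          (r i0 • ContinuousLinearMap.id ℝ (Fin d → ℝ)) (k n0 i0) := by
      intro r
      have H := HasFDerivAt.fun_sum (fun j (_ : j ∈ Finset.univ) =>
        ((hupdk n0 j).const_smul (r j)))
      have hder : (∑ j : Fin s, r j •
          (if n0 = n0 then (if j = i0 then ContinuousLinearMap.id ℝ (Fin d → ℝ) else 0)
            else 0)) = r i0 • ContinuousLinearMap.id ℝ (Fin d → ℝ) := by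
        simp only [if_pos rfl]
        exact sum_smul_ite r i0 _
      rwa [hder] at H
    have hfun : (fun v => L α x (Function.update k n0 (Function.update (k n0) i0 v)))
        = fun v => C (x (Fin.last N))
            - lam 0 ⬝ᵥ (x 0 - α)
            - ∑ n : Fin N, lam n.succ ⬝ᵥ
                (x n.succ - x n.castSucc - h n • ∑ i, b i •
                  Function.update k n0 (Function.update (k n0) i0 v) n i)
            - ∑ n : Fin N, h n * ∑ i, b i *
                (Lam n i ⬝ᵥ (Function.update k n0 (Function.update (k n0) i0 v) n i -
                  f (x n.castSucc + h n • ∑ j, a i j •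
                      Function.update k n0 (Function.update (k n0) i0 v) n j)
                    (t n + c i * h n))) := by
      funext v; rw [hL]
    rw [hfun]
    have K3 : ∀ n' : Fin N, HasFDerivAt
        (fun v => lam n'.succ ⬝ᵥ (x n'.succ - x n'.castSucc - h n' • ∑ i, b i •
            Function.update k n0 (Function.update (k n0) i0 v) n' i))
        (if n' = n0 then
          (dotCLM (lam n'.succ)).comp
            (-((h n' * b i0) • ContinuousLinearMap.id ℝ (Fin d → ℝ))) else 0)
        (k n0 i0) := by
      intro n'
      by_cases hn' : n' = n0
      · subst hn'
        rw [if_pos rfl]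
        have hin := ((hsum_inner b).const_smul (h n')).const_sub
          (x n'.succ - x n'.castSucc)
        have := (hasFDerivAt_dot (lam n'.succ) _).comp (k n' i0) hin
        rwa [show -(h n' • b i0 • ContinuousLinearMap.id ℝ (Fin d → ℝ))
          = -((h n' * b i0) • ContinuousLinearMap.id ℝ (Fin d → ℝ)) by
            rw [smul_smul]] at this
      · rw [if_neg hn']
        exact (hasFDerivAt_const
          (lam n'.succ ⬝ᵥ (x n'.succ - x n'.castSucc - h n' • ∑ i, b i • k n' i))
          _).congr_of_eventuallyEq
          (Filter.Eventually.of_forall fun v => by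
            simp only [Function.update_of_ne hn'])
    have K4 : ∀ (n' : Fin N), HasFDerivAt
        (fun v => h n' * ∑ i, b i *
            (Lam n' i ⬝ᵥ (Function.update k n0 (Function.update (k n0) i0 v) n' i -
              f (x n'.castSucc + h n' • ∑ j, a i j •
                  Function.update k n0 (Function.update (k n0) i0 v) n' j)
                (t n' + c i * h n'))))
        (if n' = n0 then
          h n' • ∑ i' : Fin s, b i' •
            (dotCLM (Lam n' i')).comp
              ((if i' = i0 then ContinuousLinearMap.id ℝ (Fin d → ℝ) else 0)
                - (Df (X n' i') (t n' + c i' * h n')).comp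
                    ((h n' * a i' i0) • ContinuousLinearMap.id ℝ (Fin d → ℝ))) else 0)
        (k n0 i0) := by
      intro n'
      by_cases hn' : n' = n0
      · subst hn'
        rw [if_pos rfl]
        have Kin : ∀ i' : Fin s, HasFDerivAt
            (fun v => Lam n' i' ⬝ᵥ
              (Function.update k n' (Function.update (k n') i0 v) n' i' -
                f (x n'.castSucc + h n' • ∑ j, a i' j •
                    Function.update k n' (Function.update (k n') i0 v) n' j)
                  (t n' + c i' * h n')))
            ((dotCLM (Lam n' i')).comp
              ((if i' = i0 then ContinuousLinearMap.id ℝ (Fin d → ℝ) else 0)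
                - (Df (X n' i') (t n' + c i' * h n')).comp
                    ((h n' * a i' i0) • ContinuousLinearMap.id ℝ (Fin d → ℝ))))
            (k n' i0) := by
          intro i'
          have hφ : HasFDerivAt
              (fun v => x n'.castSucc + h n' • ∑ j, a i' j •
                  Function.update k n' (Function.update (k n') i0 v) n' j)
              ((h n' * a i' i0) • ContinuousLinearMap.id ℝ (Fin d → ℝ)) (k n' i0) := by
            have := ((hsum_inner (a i')).const_smul (h n')).const_add (x n'.castSucc)
            rwa [show h n' • a i' i0 • ContinuousLinearMap.id ℝ (Fin d → ℝ)
              = (h n' * a i' i0) • ContinuousLinearMap.id ℝ (Fin d → ℝ) by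
                rw [smul_smul]] at this
          have hval : x n'.castSucc + h n' • ∑ j, a i' j •
              Function.update k n' (Function.update (k n') i0 (k n' i0)) n' j
              = X n' i' := by rw [hu0, hX]
          have hout : HasFDerivAt (fun z => f z (t n' + c i' * h n'))
              (Df (X n' i') (t n' + c i' * h n'))
              (x n'.castSucc + h n' • ∑ j, a i' j •
                Function.update k n' (Function.update (k n') i0 (k n' i0)) n' j) := by
            rw [hval]; exact hf _ _
          have hcomp := hout.comp (k n' i0) hφ
          have hin := (hupdk n' i').sub hcomp
          rw [if_pos rfl] at hin
          exact (hasFDerivAt_dot (Lam n' i') _).comp (k n' i0) hin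
        exact (HasFDerivAt.fun_sum (fun i' (_ : i' ∈ Finset.univ) =>
          (Kin i').const_mul (b i'))).const_mul (h n')
      · rw [if_neg hn']
        exact (hasFDerivAt_const
          (h n' * ∑ i, b i * (Lam n' i ⬝ᵥ (k n' i -
            f (x n'.castSucc + h n' • ∑ j, a i j • k n' j) (t n' + c i * h n'))))
          _).congr_of_eventuallyEq
          (Filter.Eventually.of_forall fun v => by
            simp only [Function.update_of_ne hn'])
    exact (((hasFDerivAt_const _ _).sub (hasFDerivAt_const _ _)).sub
      (HasFDerivAt.fun_sum fun n' _ => K3 n')).sub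
      (HasFDerivAt.fun_sum fun n' _ => K4 n')
  
  have F3 : ∀ (n : Fin N) (i : Fin s),
      Lam n i = lam n.castSucc + h n • ∑ j', (b j' - b j' * a j' i / b i) •
        (-((Jf (X n j') (t n + c j' * h n))ᵀ.mulVec (Lam n j'))) := by
    intro n i
    have E := ((main_k n i).fderiv).symm.trans (hgradk n i)
    simp only [Finset.sum_ite_eq', Finset.mem_univ, if_true] at E
    funext j
    have E2 := congrArg (fun D : (Fin d → ℝ) →L[ℝ] ℝ => D (Pi.single j 1)) E
    simp only [ContinuousLinearMap.sub_apply, ContinuousLinearMap.zero_apply,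
      ContinuousLinearMap.smul_apply, ContinuousLinearMap.sum_apply,
      ContinuousLinearMap.comp_apply, ContinuousLinearMap.neg_apply,
      ContinuousLinearMap.id_apply, ContinuousLinearMap.coe_smul', Pi.smul_apply,
      _root_.map_smul, dotCLM_apply, dotProduct_smul, dotProduct_neg,
      dotProduct_sub, smul_eq_mul, key, dot_ite_single] at E2
    simp only [dotProduct_single, mul_one] at E2
    have hsplit : ∑ x : Fin s, b x * ((if x = i then Lam n x j else 0)
          - h n * a x i * ((Jf (X n x) (t n + c x * h n))ᵀ.mulVec (Lam n x)) j)
        = b i * Lam n i j - h n * ∑ x : Fin s,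
            b x * a x i * ((Jf (X n x) (t n + c x * h n))ᵀ.mulVec (Lam n x)) j := by
      have hterm : ∀ x : Fin s, b x * ((if x = i then Lam n x j else 0)
            - h n * a x i * ((Jf (X n x) (t n + c x * h n))ᵀ.mulVec (Lam n x)) j)
          = (if x = i then b x * Lam n x j else 0)
            - h n * (b x * a x i * ((Jf (X n x) (t n + c x * h n))ᵀ.mulVec (Lam n x)) j) :=
        fun x => by split_ifs <;> ring
      rw [Finset.sum_congr rfl (fun x _ => hterm x), Finset.sum_sub_distrib,
        Finset.sum_ite_eq' Finset.univ i, ← Finset.mul_sum]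
      simp
    rw [hsplit] at E2
    have E2' : b i * lam n.succ j - b i * Lam n i j
        + h n * ∑ x : Fin s,
            b x * a x i * ((Jf (X n x) (t n + c x * h n))ᵀ.mulVec (Lam n x)) j = 0 :=
      mul_left_cancel₀ (hh n) (by linear_combination E2)
    have F2j := congrFun (F2 n) j
    simp only [Pi.add_apply, Pi.smul_apply, Finset.sum_apply, Pi.neg_apply,
      smul_eq_mul] at F2j
    simp only [Pi.add_apply, Pi.smul_apply, Finset.sum_apply, Pi.neg_apply, smul_eq_mul]
    have hg : ∑ x : Fin s, (b x - b x * a x i / b i) *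
          -(((Jf (X n x) (t n + c x * h n))ᵀ.mulVec (Lam n x)) j)
        = (∑ x : Fin s, b x * -(((Jf (X n x) (t n + c x * h n))ᵀ.mulVec (Lam n x)) j))
          + (∑ x : Fin s, b x * a x i *
              ((Jf (X n x) (t n + c x * h n))ᵀ.mulVec (Lam n x)) j) / b i := by
      rw [Finset.sum_div, ← Finset.sum_add_distrib]
      exact Finset.sum_congr rfl fun x _ => by ring
    rw [hg]
    generalize hS : (∑ x : Fin s,
      b x * a x i * ((Jf (X n x) (t n + c x * h n))ᵀ.mulVec (Lam n x)) j) = S at E2' ⊢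
    generalize hA : (∑ x : Fin s,
      b x * -(((Jf (X n x) (t n + c x * h n))ᵀ.mulVec (Lam n x)) j)) = A at F2j ⊢
    have key2 : h n * (A + S / b i) = h n * A + (h n * S) / b i := by ring
    rw [key2]
    have e3 : (h n * S) / b i = Lam n i j - lam n.succ j := by
      rw [div_eq_iff (hb i)]
      linear_combination E2'
    rw [e3]
    linear_combination F2j
  
  have main_α : HasFDerivAt (fun v => L v x k) (dotCLM (lam 0)) α := by
    have hfun : (fun v => L v x k) = fun v =>
        C (x (Fin.last N)) - lam 0 ⬝ᵥ (x 0 - v)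
          - ∑ n : Fin N, lam n.succ ⬝ᵥ
              (x n.succ - x n.castSucc - h n • ∑ i, b i • k n i)
          - ∑ n : Fin N, h n * ∑ i, b i *
              (Lam n i ⬝ᵥ (k n i -
                f (x n.castSucc + h n • ∑ j, a i j • k n j) (t n + c i * h n))) := by
      funext v; rw [hL]
    rw [hfun]
    have h2 : HasFDerivAt (fun v : Fin d → ℝ => lam 0 ⬝ᵥ (x 0 - v))
        (-(dotCLM (lam 0))) α := by
      have hin : HasFDerivAt (fun v : Fin d → ℝ => x 0 - v)
          (-(ContinuousLinearMap.id ℝ (Fin d → ℝ))) α :=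
        (hasFDerivAt_id α).const_sub (x 0)
      have := (hasFDerivAt_dot (lam 0) _).comp α hin
      rwa [show (dotCLM (lam 0)).comp (-(ContinuousLinearMap.id ℝ (Fin d → ℝ)))
        = -(dotCLM (lam 0)) by ext v; simp] at this
    have Hfin := (((hasFDerivAt_const (C (x (Fin.last N))) α).sub h2).sub
      (hasFDerivAt_const (∑ n : Fin N, lam n.succ ⬝ᵥ
        (x n.succ - x n.castSucc - h n • ∑ i, b i • k n i)) α)).sub
      (hasFDerivAt_const (∑ n : Fin N, h n * ∑ i, b i *
        (Lam n i ⬝ᵥ (k n i -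
          f (x n.castSucc + h n • ∑ j, a i j • k n j) (t n + c i * h n)))) α)
    rwa [show (0 : (Fin d → ℝ) →L[ℝ] ℝ) - -(dotCLM (lam 0)) - 0 - 0
      = dotCLM (lam 0) by ext v; simp] at Hfin
  refine ⟨F1, ?_, ?_⟩
  · intro ell hell
    refine ⟨fun n => ?_, fun n i => ?_⟩
    · simp only [hell]; exact F2 n
    · simp only [hell]; exact F3 n i
  · intro w
    rw [main_α.fderiv, dotCLM_apply]
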